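/- ᾱ is subadditive for sets disjoint at infinity: if E, F ⊆ ℝⁿ satisfy (E ∩ F) \ B_r(q) = ∅ for some r > 0 and q ∈ ℝⁿ, then ᾱ(E ∪ F) ≤ ᾱ(E) + ᾱ(F); moreover, if α(E) and α(F) both exist, then α(E ∪ F) exists and equals α(E) + α(F). -/

import Mathlib

open MeasureTheory Filter Metric Topology

/-- The weighted tail integral `∫_{ℝⁿ \ B_r(q)} χ_E(y) / |q - y|^{n+s} dy`. -/
noncomputable def tailIntegral (n : ℕ) (E : Set (EuclideanSpace ℝ (Fin n))) (s : ℝ)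
    (q : EuclideanSpace ℝ (Fin n)) (r : ℝ) : ℝ :=
  ∫ y in (ball q r)ᶜ, E.indicator (fun _ => (1 : ℝ)) y / ‖q - y‖ ^ ((n : ℝ) + s)

/-- `α_s(E) = s · ∫_{ℝⁿ \ B₁} χ_E(y)/|y|^{n+s} dy`. -/
noncomputable def alphaS (n : ℕ) (E : Set (EuclideanSpace ℝ (Fin n))) (s : ℝ) : ℝ :=
  s * tailIntegral n E s 0 1

/-- `ᾱ(E) = limsup_{s→0⁺} α_s(E)`. -/
noncomputable def alphaBar (n : ℕ) (E : Set (EuclideanSpace ℝ (Fin n))) : ℝ :=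
  limsup (alphaS n E) (𝓝[>] (0 : ℝ))

section AlphaAux
open Set
variable {n : ℕ}

lemma majorant_integrableOn (n : ℕ) {s : ℝ} (hs : 0 < s) :
    IntegrableOn (fun y : EuclideanSpace ℝ (Fin n) => ‖y‖ ^ (-((n:ℝ)+s)))
      (ball 0 1)ᶜ volume := by
  have hfin : ((Module.finrank ℝ (EuclideanSpace ℝ (Fin n)) : ℝ)) < (n:ℝ)+s := by
    rw [finrank_euclideanSpace_fin]; linarith
  have h1 : Integrable (fun y : EuclideanSpace ℝ (Fin n) =>
      (2:ℝ)^((n:ℝ)+s) * (1+‖y‖)^(-((n:ℝ)+s))) volume :=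
    (integrable_one_add_norm hfin).const_mul _
  refine (h1.integrableOn).mono' ?_ ?_
  · exact Measurable.aestronglyMeasurable (by fun_prop)
  · rw [ae_restrict_iff' measurableSet_ball.compl]
    refine Eventually.of_forall fun y hy => ?_
    have hy1 : 1 ≤ ‖y‖ := by
      simpa [mem_ball, dist_zero_right] using hy
    have hnn : (0:ℝ) ≤ ‖y‖ ^ (-((n:ℝ)+s)) := Real.rpow_nonneg (norm_nonneg _) _
    rw [Real.norm_eq_abs, abs_of_nonneg hnn]
    have h2 : (1+‖y‖)/2 ≤ ‖y‖ := by linarith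
    have h3 : ‖y‖ ^ (-((n:ℝ)+s)) ≤ ((1+‖y‖)/2) ^ (-((n:ℝ)+s)) :=
      Real.rpow_le_rpow_of_nonpos (by linarith) h2 (by simp only [neg_nonpos]; positivity)
    refine h3.trans (le_of_eq ?_)
    rw [Real.div_rpow (by linarith) (by norm_num), Real.rpow_neg (by norm_num : (0:ℝ) ≤ 2)]
    field_simp

lemma tail_integrableOn (n : ℕ) (E : Set (EuclideanSpace ℝ (Fin n)))
    (hE : MeasurableSet E) {s : ℝ} (hs : 0 < s) :
    IntegrableOn (fun y : EuclideanSpace ℝ (Fin n) =>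
      E.indicator (fun _ => (1 : ℝ)) y / ‖(0 : EuclideanSpace ℝ (Fin n)) - y‖ ^ ((n : ℝ) + s))
      (ball 0 1)ᶜ volume := by
  refine (majorant_integrableOn n hs).mono' ?_ ?_
  · refine Measurable.aestronglyMeasurable ?_
    exact ((measurable_const.indicator hE)).div (by fun_prop)
  · rw [ae_restrict_iff' measurableSet_ball.compl]
    refine Eventually.of_forall fun y hy => ?_
    have hy1 : 1 ≤ ‖y‖ := by simpa [mem_ball, dist_zero_right] using hy
    have hpos : (0:ℝ) < ‖y‖ ^ ((n:ℝ) + s) :=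
      Real.rpow_pos_of_pos (by linarith) _
    have hind : E.indicator (fun _ => (1:ℝ)) y ≤ 1 := by
      classical
      by_cases hmem : y ∈ E <;> simp [Set.indicator_apply, hmem]
    have hind0 : 0 ≤ E.indicator (fun _ => (1:ℝ)) y :=
      Set.indicator_nonneg (fun _ _ => zero_le_one) y
    rw [zero_sub, norm_neg, Real.norm_eq_abs,
      abs_of_nonneg (div_nonneg hind0 hpos.le), Real.rpow_neg (norm_nonneg _)]
    rw [← one_div]
    exact div_le_div_of_nonneg_right hind hpos.le |>.trans_eq rfl

lemma majorant_value (n : ℕ) (hn : 0 < n) {s : ℝ} (hs : 0 < s) :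
    ∫ y in (ball (0 : EuclideanSpace ℝ (Fin n)) 1)ᶜ, ‖y‖ ^ (-((n:ℝ)+s))
      = (n * (volume (ball (0 : EuclideanSpace ℝ (Fin n)) 1)).toReal) / s := by
  haveI : Nontrivial (EuclideanSpace ℝ (Fin n)) :=
    Module.nontrivial_of_finrank_pos (R := ℝ) (by rw [finrank_euclideanSpace_fin]; exact_mod_cast hn)
  set g : ℝ → ℝ := (Ici (1:ℝ)).indicator (fun t => t ^ (-((n:ℝ)+s))) with hg
  have h0 : ∫ y in (ball (0 : EuclideanSpace ℝ (Fin n)) 1)ᶜ, ‖y‖ ^ (-((n:ℝ)+s))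
      = ∫ y : EuclideanSpace ℝ (Fin n), g ‖y‖ := by
    rw [← integral_indicator measurableSet_ball.compl]
    refine integral_congr_ae (Eventually.of_forall fun y => ?_)
    classical
    by_cases hy : y ∈ (ball (0 : EuclideanSpace ℝ (Fin n)) 1)ᶜ
    · have h1 : 1 ≤ ‖y‖ := by simpa [mem_ball, dist_zero_right] using hy
      simp [Set.indicator_of_mem hy, hg, Set.indicator_of_mem (mem_Ici.2 h1)]
    · have h1 : ¬ (1 ≤ ‖y‖) := by
        simp only [mem_compl_iff, not_not, mem_ball, dist_zero_right] at hy
        linarith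
      rw [Set.indicator_of_notMem hy]
      exact (Set.indicator_of_notMem (by simpa [mem_Ici] using h1) _).symm
  rw [h0, MeasureTheory.integral_fun_norm_addHaar (volume : Measure (EuclideanSpace ℝ (Fin n))) g]
  have hdim : Module.finrank ℝ (EuclideanSpace ℝ (Fin n)) = n := finrank_euclideanSpace_fin
  rw [hdim]
  have h2 : ∫ t in Ioi (0:ℝ), t ^ (n - 1) • g t = 1 / s := by
    have h3 : ∀ t : ℝ, t ^ (n - 1) • g t
        = (Ici (1:ℝ)).indicator (fun t => t ^ (n-1) * t ^ (-((n:ℝ)+s))) t := by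
      intro t
      classical
      by_cases ht : t ∈ Ici (1:ℝ) <;>
        simp [hg, Set.indicator_of_mem, Set.indicator_of_notMem, ht, smul_eq_mul]
    simp only [h3]
    rw [setIntegral_indicator measurableSet_Ici]
    have h4 : Ioi (0:ℝ) ∩ Ici 1 = Ici (1:ℝ) :=
      inter_eq_self_of_subset_right (fun t ht => mem_Ioi.2 (lt_of_lt_of_le zero_lt_one ht))
    rw [h4, integral_Ici_eq_integral_Ioi]
    have h5 : ∀ t ∈ Ioi (1:ℝ), t ^ (n-1) * t ^ (-((n:ℝ)+s)) = t ^ (-1 - s) := by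
      intro t ht
      have ht0 : (0:ℝ) < t := lt_trans zero_lt_one ht
      rw [← Real.rpow_natCast t (n-1), ← Real.rpow_add ht0]
      congr 1
      rw [Nat.cast_sub hn]
      push_cast
      ring
    rw [setIntegral_congr_fun measurableSet_Ioi h5,
      integral_Ioi_rpow_of_lt (by linarith) zero_lt_one]
    rw [Real.one_rpow]
    ring_nf
  rw [h2]
  simp only [nsmul_eq_mul, smul_eq_mul]
  rw [measureReal_def]
  ring


lemma tail_nonneg (n : ℕ) (E : Set (EuclideanSpace ℝ (Fin n))) (s : ℝ)
    (q : EuclideanSpace ℝ (Fin n)) (r : ℝ) : 0 ≤ tailIntegral n E s q r :=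
  setIntegral_nonneg measurableSet_ball.compl fun y _ =>
    div_nonneg (Set.indicator_nonneg (fun _ _ => zero_le_one) y)
      (Real.rpow_nonneg (norm_nonneg _) _)

lemma tail_le (n : ℕ) (E : Set (EuclideanSpace ℝ (Fin n))) (hE : MeasurableSet E)
    (hn : 0 < n) {s : ℝ} (hs : 0 < s) :
    tailIntegral n E s 0 1
      ≤ (n * (volume (ball (0 : EuclideanSpace ℝ (Fin n)) 1)).toReal) / s := by
  rw [← majorant_value n hn hs]
  refine setIntegral_mono_on (tail_integrableOn n E hE hs) (majorant_integrableOn n hs)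
    measurableSet_ball.compl fun y hy => ?_
  have hy1 : 1 ≤ ‖y‖ := by simpa [mem_ball, dist_zero_right] using hy
  have hpos : (0:ℝ) < ‖y‖ ^ ((n:ℝ) + s) := Real.rpow_pos_of_pos (by linarith) _
  have hind : E.indicator (fun _ => (1:ℝ)) y ≤ 1 := by
    classical
    by_cases hmem : y ∈ E <;> simp [Set.indicator_apply, hmem]
  rw [zero_sub, norm_neg, Real.rpow_neg (norm_nonneg _), ← one_div]
  exact div_le_div_of_nonneg_right hind hpos.le |>.trans_eq rfl

lemma tail_inter_le (n : ℕ) (G : Set (EuclideanSpace ℝ (Fin n))) (hG : MeasurableSet G)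
    (q : EuclideanSpace ℝ (Fin n)) {r : ℝ} (hGr : G ⊆ ball q r) {s : ℝ} (hs : 0 < s) :
    tailIntegral n G s 0 1 ≤ (volume (ball q r)).toReal := by
  have hint2 : Integrable ((ball q r).indicator (fun _ => (1:ℝ))) volume := by
    rw [integrable_indicator_iff measurableSet_ball]
    exact integrableOn_const measure_ball_lt_top.ne
  have step1 : tailIntegral n G s 0 1
      ≤ ∫ y in (ball (0 : EuclideanSpace ℝ (Fin n)) 1)ᶜ,
          (ball q r).indicator (fun _ => (1:ℝ)) y := by
    refine setIntegral_mono_on (tail_integrableOn n G hG hs) hint2.integrableOn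
      measurableSet_ball.compl fun y hy => ?_
    have hy1 : 1 ≤ ‖y‖ := by simpa [mem_ball, dist_zero_right] using hy
    have hone : (1:ℝ) ≤ ‖y‖ ^ ((n:ℝ) + s) :=
      Real.one_le_rpow hy1 (by positivity)
    classical
    by_cases hmem : y ∈ G
    · rw [Set.indicator_of_mem hmem, Set.indicator_of_mem (hGr hmem), zero_sub, norm_neg]
      exact div_le_one_of_le₀ hone (by positivity)
    · rw [Set.indicator_of_notMem hmem]
      simp only [zero_div]
      exact Set.indicator_nonneg (fun _ _ => zero_le_one) y
  refine step1.trans ?_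
  have step2 : ∫ y in (ball (0 : EuclideanSpace ℝ (Fin n)) 1)ᶜ,
      (ball q r).indicator (fun _ => (1:ℝ)) y
      ≤ ∫ y, (ball q r).indicator (fun _ => (1:ℝ)) y :=
    setIntegral_le_integral hint2
      (Eventually.of_forall fun y => Set.indicator_nonneg (fun _ _ => zero_le_one) y)
  refine step2.trans ?_
  rw [integral_indicator_const _ measurableSet_ball]
  simp
  exact le_rfl

lemma tail_add (n : ℕ) (E F : Set (EuclideanSpace ℝ (Fin n)))
    (hE : MeasurableSet E) (hF : MeasurableSet F) {s : ℝ} (hs : 0 < s) :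
    tailIntegral n (E ∪ F) s 0 1 + tailIntegral n (E ∩ F) s 0 1
      = tailIntegral n E s 0 1 + tailIntegral n F s 0 1 := by
  unfold tailIntegral
  rw [← integral_add (tail_integrableOn n (E ∪ F) (hE.union hF) hs)
      (tail_integrableOn n (E ∩ F) (hE.inter hF) hs),
    ← integral_add (tail_integrableOn n E hE hs) (tail_integrableOn n F hF hs)]
  refine setIntegral_congr_fun measurableSet_ball.compl fun y _ => ?_
  have : (E ∪ F).indicator (fun _ => (1:ℝ)) y + (E ∩ F).indicator (fun _ => (1:ℝ)) y
      = E.indicator (fun _ => (1:ℝ)) y + F.indicator (fun _ => (1:ℝ)) y := by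
    classical
    by_cases hyE : y ∈ E <;> by_cases hyF : y ∈ F <;>
      simp [Set.indicator_apply, hyE, hyF]
  simp only [← add_div, this]

end AlphaAux

open Set in
/-- Additivity: if `(E ∩ F) \ B_r(q) = ∅` for some `r > 0`, `q ∈ ℝⁿ`, then
`ᾱ(E ∪ F) ≤ ᾱ(E) + ᾱ(F)`; and if `α(E)` and `α(F)` both exist, then `α(E ∪ F)`
exists and equals `α(E) + α(F)`. -/
theorem alphaBar_subadditive (n : ℕ) (E F : Set (EuclideanSpace ℝ (Fin n)))
    (hE : MeasurableSet E) (hF : MeasurableSet F)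
    (r : ℝ) (hr : 0 < r) (q : EuclideanSpace ℝ (Fin n))
    (h : (E ∩ F) \ ball q r = ∅) :
    alphaBar n (E ∪ F) ≤ alphaBar n E + alphaBar n F ∧
      ∀ aE aF : ℝ, Tendsto (alphaS n E) (𝓝[>] (0 : ℝ)) (𝓝 aE) →
        Tendsto (alphaS n F) (𝓝[>] (0 : ℝ)) (𝓝 aF) →
        Tendsto (alphaS n (E ∪ F)) (𝓝[>] (0 : ℝ)) (𝓝 (aE + aF)) := by
  classical
  rcases Nat.eq_zero_or_pos n with hn | hn
  · subst hn
    have hball : (ball (0 : EuclideanSpace ℝ (Fin 0)) 1)ᶜ = ∅ := by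
      ext y
      simp [Subsingleton.elim y 0]
    have hzero : ∀ G : Set (EuclideanSpace ℝ (Fin 0)), alphaS 0 G = fun _ => (0:ℝ) := by
      intro G
      funext s
      simp [alphaS, tailIntegral, hball]
    have hbar : ∀ G : Set (EuclideanSpace ℝ (Fin 0)), alphaBar 0 G = 0 := by
      intro G
      rw [alphaBar, hzero G]
      exact limsup_const 0
    refine ⟨by rw [hbar, hbar, hbar]; norm_num, fun aE aF hAE hAF => ?_⟩
    rw [hzero] at hAE hAF ⊢
    have h0 : aE = 0 := tendsto_nhds_unique hAE tendsto_const_nhds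
    have h1 : aF = 0 := tendsto_nhds_unique hAF tendsto_const_nhds
    rw [h0, h1]
    simpa using tendsto_const_nhds
  -- main case
  set l : Filter ℝ := 𝓝[>] (0:ℝ) with hl
  have hEF_sub : E ∩ F ⊆ ball q r := by rwa [Set.diff_eq_empty] at h
  set C : ℝ := n * (volume (ball (0 : EuclideanSpace ℝ (Fin n)) 1)).toReal with hC
  set K : ℝ := (volume (ball q r)).toReal with hK
  have hmem : ∀ᶠ s in l, s ∈ Ioi (0:ℝ) := self_mem_nhdsWithin
  have hid : ∀ s ∈ Ioi (0:ℝ),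
      alphaS n (E ∪ F) s = alphaS n E s + alphaS n F s - alphaS n (E ∩ F) s := by
    intro s hs
    have htail := tail_add n E F hE hF (mem_Ioi.1 hs)
    simp only [alphaS]
    have h' : tailIntegral n (E ∪ F) s 0 1
        = tailIntegral n E s 0 1 + tailIntegral n F s 0 1
          - tailIntegral n (E ∩ F) s 0 1 := by linarith
    rw [h']
    ring
  have hnonneg : ∀ G : Set (EuclideanSpace ℝ (Fin n)), ∀ᶠ s in l, 0 ≤ alphaS n G s := by
    intro G
    filter_upwards [hmem] with s hs
    exact mul_nonneg (le_of_lt (mem_Ioi.1 hs)) (tail_nonneg n G s 0 1)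
  have hub : ∀ G : Set (EuclideanSpace ℝ (Fin n)), MeasurableSet G →
      ∀ᶠ s in l, alphaS n G s ≤ C := by
    intro G hG
    filter_upwards [hmem] with s hs
    have hs' : (0:ℝ) < s := mem_Ioi.1 hs
    calc alphaS n G s ≤ s * (C / s) :=
          mul_le_mul_of_nonneg_left (tail_le n G hG hn hs') hs'.le
      _ = C := by field_simp
  have hg0 : Tendsto (alphaS n (E ∩ F)) l (𝓝 0) := by
    have hup : ∀ᶠ s in l, alphaS n (E ∩ F) s ≤ s * K := by
      filter_upwards [hmem] with s hs
      exact mul_le_mul_of_nonneg_left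
        (tail_inter_le n (E ∩ F) (hE.inter hF) q hEF_sub (mem_Ioi.1 hs)) (le_of_lt (mem_Ioi.1 hs))
    have hlin : Tendsto (fun s : ℝ => s * K) l (𝓝 0) := by
      have h1 : Tendsto (fun s : ℝ => s * K) (𝓝 (0:ℝ)) (𝓝 (0 * K)) :=
        tendsto_id.mul_const K
      rw [zero_mul] at h1
      exact h1.mono_left nhdsWithin_le_nhds
    exact squeeze_zero' (hnonneg (E ∩ F)) hup hlin
  constructor
  · -- limsup part
    have hwle : alphaS n (E ∪ F) ≤ᶠ[l] (alphaS n E + alphaS n F) := by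
      filter_upwards [hmem, hnonneg (E ∩ F)] with s hs h2
      have := hid s hs
      simp only [Pi.add_apply]
      linarith
    have hcob_w : IsCoboundedUnder (· ≤ ·) l (alphaS n (E ∪ F)) := by
      refine IsBoundedUnder.isCoboundedUnder_le ⟨0, eventually_map.2 ?_⟩
      exact hnonneg (E ∪ F)
    have hbd_sum : IsBoundedUnder (· ≤ ·) l (alphaS n E + alphaS n F) := by
      refine ⟨C + C, eventually_map.2 ?_⟩
      filter_upwards [hub E hE, hub F hF] with s h1 h2
      exact add_le_add h1 h2
    refine (limsup_le_limsup hwle hcob_w hbd_sum).trans ?_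
    refine limsup_add_le ⟨0, eventually_map.2 (hnonneg E)⟩
      ⟨C, eventually_map.2 (hub E hE)⟩
      (IsBoundedUnder.isCoboundedUnder_le ⟨0, eventually_map.2 (hnonneg F)⟩)
      ⟨C, eventually_map.2 (hub F hF)⟩
  · intro aE aF hAE hAF
    have htend : Tendsto (fun s => alphaS n E s + alphaS n F s - alphaS n (E ∩ F) s)
        l (𝓝 (aE + aF - 0)) := (hAE.add hAF).sub hg0
    rw [sub_zero] at htend
    refine htend.congr' ?_
    filter_upwards [hmem] with s hs
    exact (hid s hs).symm
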